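/- Let H be a Hopf algebra over a field F with antipode S, let M ∈ H be an invertible group-like element, and let p ∈ F^× satisfy p^r ≠ 1 for 1 ≤ r ≤ t. Then S((M ; c choose t)_p) = (−1)^t p^{ct − binom(t,2)} M^{−t} (M ; t−c−1 choose t)_p, for every c ∈ ℤ. -/
import Mathlib


open TensorProduct

/-- The `p`-binomial coefficient `(M ; c choose n)_p := ∏_{r=1}^n (p^{c+1-r} M − 1)/(p^r − 1)`. -/
noncomputable def pbinom {F A : Type*} [Field F] [Ring A] [Algebra F A]
    (p : Fˣ) (M : A) (c : ℤ) : ℕ → A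
  | 0 => 1
  | n + 1 =>
      pbinom p M c n *
        (((p : F) ^ (n + 1) - 1)⁻¹ • (((p ^ (c - (n : ℤ)) : Fˣ) : F) • M - 1))

section aux

variable {F A B : Type*} [Field F] [Ring A] [Ring B] [Algebra F A] [Algebra F B]

lemma pbinom_map (f : A →ₐ[F] B) (p : Fˣ) (M : A) (c : ℤ) (t : ℕ) :
    f (pbinom p M c t) = pbinom p (f M) c t := by
  induction t with
  | zero => simp [pbinom]
  | succ n ih => simp [pbinom, ih, map_smul, map_sub]

lemma commute_pbinom {x M : A} (h : Commute x M) (p : Fˣ) (c : ℤ) (t : ℕ) :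
    Commute x (pbinom p M c t) := by
  induction t with
  | zero => exact Commute.one_right x
  | succ n ih =>
      exact ih.mul_right (Commute.smul_right
        ((h.smul_right _).sub_right (Commute.one_right x)) _)

lemma pbinom_shift (p : Fˣ) (M : A) (c : ℤ) (t : ℕ) :
    pbinom p M (c + 1) (t + 1) =
      (((p : F) ^ (t + 1) - 1)⁻¹ • (((p ^ (c + 1) : Fˣ) : F) • M - 1)) * pbinom p M c t := by
  induction t with
  | zero => simp [pbinom]
  | succ n ih =>
      show pbinom p M (c+1) (n+1) * _ = _
      rw [ih]
      show (((p : F) ^ (n + 1) - 1)⁻¹ • (((p ^ (c + 1) : Fˣ) : F) • M - 1)) * pbinom p M c n *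
          (((p : F) ^ (n + 1 + 1) - 1)⁻¹ • (((p ^ (c + 1 - (n + 1 : ℕ) : ℤ) : Fˣ) : F) • M - 1)) =
        (((p : F) ^ (n + 1 + 1) - 1)⁻¹ • (((p ^ (c + 1) : Fˣ) : F) • M - 1)) *
          (pbinom p M c n * (((p : F) ^ (n + 1) - 1)⁻¹ • (((p ^ (c - (n : ℤ)) : Fˣ) : F) • M - 1)))
      have he : (c + 1 - (n + 1 : ℕ) : ℤ) = c - (n : ℤ) := by push_cast; ring
      rw [he, mul_assoc]
      have hPM : Commute (pbinom p M c n) M := (commute_pbinom (Commute.refl M) p c n).symm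
      have hcomm : Commute (pbinom p M c n)
          (((p : F) ^ (n + 1 + 1) - 1)⁻¹ • (((p ^ (c - (n : ℤ)) : Fˣ) : F) • M - 1)) :=
        ((hPM.smul_right _).sub_right (Commute.one_right _)).smul_right _
      have hcomm1 : Commute (pbinom p M c n)
          (((p : F) ^ (n + 1) - 1)⁻¹ • (((p ^ (c - (n : ℤ)) : Fˣ) : F) • M - 1)) :=
        ((hPM.smul_right _).sub_right (Commute.one_right _)).smul_right _
      rw [hcomm.eq, hcomm1.eq, ← mul_assoc, ← mul_assoc]
      congr 1
      simp only [smul_mul_assoc, mul_smul_comm, smul_smul]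
      rw [mul_comm (((p:F) ^ (n+1) - 1)⁻¹) (((p:F) ^ (n+1+1) - 1)⁻¹)]

/-- The purely algebraic heart: if `N * M = M * N = 1` then
`pbinom p N c t = (−1)^t p^{ct − C(t,2)} • (N^t * pbinom p M (t−c−1) t)`. -/
lemma pbinom_inv (p : Fˣ) {M N : A} (hNM : N * M = 1) (hMN : M * N = 1) (c : ℤ) (t : ℕ) :
    pbinom p N c t =
      ((-1 : F) ^ t * ((p ^ (c * (t : ℤ) - (t.choose 2 : ℤ)) : Fˣ) : F)) •
        (N ^ t * pbinom p M ((t : ℤ) - c - 1) t) := by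
  have hcMN : Commute N M := by rw [Commute, SemiconjBy, hNM, hMN]
  induction t with
  | zero => simp [pbinom]
  | succ n ih =>
      show pbinom p N c n * _ = _
      rw [ih]
      -- key identity for the last factor
      have hβα : ((p ^ (c - (n : ℤ)) : Fˣ) : F) * ((p ^ ((n : ℤ) - c) : Fˣ) : F) = 1 := by
        rw [← Units.val_mul, ← zpow_add]
        norm_num
      have key : ((p ^ (c - (n : ℤ)) : Fˣ) : F) • N - 1 =
          (-((p ^ (c - (n : ℤ)) : Fˣ) : F)) •
            (N * (((p ^ ((n : ℤ) - c) : Fˣ) : F) • M - 1)) := by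
        simp only [mul_sub, mul_smul_comm, mul_one, hNM, smul_sub, smul_smul, neg_mul,
          hβα, neg_smul, one_smul]
        abel
      rw [key]
      -- rewrite the RHS pbinom via the shift lemma
      have he : ((n + 1 : ℕ) : ℤ) - c - 1 = ((n : ℤ) - c - 1) + 1 := by push_cast; ring
      rw [he, pbinom_shift]
      have he2 : ((n : ℤ) - c - 1) + 1 = (n : ℤ) - c := by ring
      rw [he2]
      -- now both sides are scalars times products of N, M-factors and pbinom p M (n-c-1) n
      have hP : Commute (pbinom p M ((n : ℤ) - c - 1) n)
          (((p ^ ((n : ℤ) - c) : Fˣ) : F) • M - 1) :=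
        ((commute_pbinom (Commute.refl M) p _ n).symm.smul_right _).sub_right
          (Commute.one_right _)
      have hN : Commute N (pbinom p M ((n : ℤ) - c - 1) n) :=
        commute_pbinom hcMN p _ n
      simp only [smul_mul_assoc, mul_smul_comm, smul_smul]
      rw [mul_assoc (N ^ n) (pbinom p M ((n : ℤ) - c - 1) n),
        ← mul_assoc (pbinom p M ((n : ℤ) - c - 1) n) N, ← hN.eq,
        mul_assoc N (pbinom p M ((n : ℤ) - c - 1) n), hP.eq,
        ← mul_assoc (N ^ n) N, ← pow_succ]
      congr 1
      -- scalar arithmetic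
      have hch : (((n + 1).choose 2 : ℕ) : ℤ) = ((n.choose 2 : ℕ) : ℤ) + (n : ℤ) := by
        rw [Nat.choose_succ_succ]
        push_cast [Nat.choose_one_right]
        ring
      have hz : (p ^ (c * (n : ℤ) - (n.choose 2 : ℤ)) : Fˣ) * (p ^ (c - (n : ℤ)) : Fˣ)
          = (p ^ (c * ((n + 1 : ℕ) : ℤ) - (((n + 1).choose 2 : ℕ) : ℤ)) : Fˣ) := by
        rw [← zpow_add, hch]
        congr 1
        push_cast
        ring
      rw [← hz]
      push_cast
      ring

end aux

/-- Powers of a group-like unit are sent to powers of the inverse by the antipode. -/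
lemma antipode_pow_of_grouplike {F H : Type*} [Field F] [Ring H] [HopfAlgebra F H]
    {M : H} (hM : IsUnit M)
    (hΔ : Coalgebra.comul (R := F) M = M ⊗ₜ[F] M)
    (hε : Coalgebra.counit (R := F) M = 1) (n : ℕ) :
    HopfAlgebra.antipode (R := F) (M ^ n) = (((hM.unit⁻¹ : Hˣ) : H)) ^ n := by
  have hΔn : Coalgebra.comul (R := F) (M ^ n) = (M ^ n) ⊗ₜ[F] (M ^ n) := by
    rw [Bialgebra.comul_pow, hΔ, Algebra.TensorProduct.tmul_pow]
  have hεn : Coalgebra.counit (R := F) (M ^ n) = 1 := by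
    rw [Bialgebra.counit_pow, hε, one_pow]
  have h1 : HopfAlgebra.antipode (R := F) (M ^ n) * M ^ n = 1 := by
    have := HopfAlgebra.mul_antipode_rTensor_comul_apply (R := F) (M ^ n)
    rw [hΔn, hεn, map_one] at this
    simpa [LinearMap.rTensor_tmul, LinearMap.mul'_apply] using this
  have hMu : M ^ n = ((hM.unit ^ n : Hˣ) : H) := by
    rw [Units.val_pow_eq_pow_val, hM.unit_spec]
  have hMn : M ^ n * (((hM.unit⁻¹ : Hˣ) : H)) ^ n = 1 := by
    rw [hMu, ← Units.val_pow_eq_pow_val, inv_pow, ← Units.val_mul, mul_inv_cancel,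
      Units.val_one]
  calc HopfAlgebra.antipode (R := F) (M ^ n)
      = HopfAlgebra.antipode (R := F) (M ^ n) * (M ^ n * (((hM.unit⁻¹ : Hˣ) : H)) ^ n) := by
        rw [hMn, mul_one]
    _ = (((hM.unit⁻¹ : Hˣ) : H)) ^ n := by rw [← mul_assoc, h1, one_mul]

/-- The antipode acts on polynomials in a group-like unit by substituting the inverse. -/
lemma antipode_aeval {F H : Type*} [Field F] [Ring H] [HopfAlgebra F H]
    {M : H} (hM : IsUnit M)
    (hΔ : Coalgebra.comul (R := F) M = M ⊗ₜ[F] M)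
    (hε : Coalgebra.counit (R := F) M = 1) (Q : Polynomial F) :
    HopfAlgebra.antipode (R := F) (Polynomial.aeval M Q) =
      Polynomial.aeval (((hM.unit⁻¹ : Hˣ) : H)) Q := by
  induction Q using Polynomial.induction_on' with
  | add a b ha hb => rw [map_add, map_add, ha, hb, map_add]
  | monomial n a =>
      rw [Polynomial.aeval_monomial, Polynomial.aeval_monomial, ← Algebra.smul_def,
        ← Algebra.smul_def, map_smul, antipode_pow_of_grouplike hM hΔ hε]

/-- If `M` is an invertible group-like element of a Hopf algebra `H` over `F`, the antipode
satisfies `S((M ; c choose t)_p) = (−1)^t p^{ct − binom(t,2)} M^{−t} (M ; t−c−1 choose t)_p`. -/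
theorem antipode_pbinom {F H : Type*} [Field F] [Ring H] [HopfAlgebra F H]
    (M : H) (hM : IsUnit M)
    (hΔ : Coalgebra.comul (R := F) M = M ⊗ₜ[F] M)
    (hε : Coalgebra.counit (R := F) M = 1)
    (p : Fˣ) (t : ℕ) (hp : ∀ r : ℕ, 1 ≤ r → r ≤ t → (p : F) ^ r ≠ 1) (c : ℤ) :
    HopfAlgebra.antipode (R := F) (pbinom p M c t) =
      ((-1 : F) ^ t * ((p ^ (c * (t : ℤ) - (t.choose 2 : ℤ)) : Fˣ) : F)) •
        ((((hM.unit⁻¹ : Hˣ) : H)) ^ t * pbinom p M ((t : ℤ) - c - 1) t) := by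
  set N : H := ((hM.unit⁻¹ : Hˣ) : H) with hN
  have hNM : N * M = 1 := hM.val_inv_mul
  have hMN : M * N = 1 := hM.mul_val_inv
  have h1 : pbinom p M c t = Polynomial.aeval M (pbinom p (Polynomial.X : Polynomial F) c t) := by
    rw [pbinom_map (Polynomial.aeval M) p Polynomial.X c t, Polynomial.aeval_X]
  have h2 : Polynomial.aeval N (pbinom p (Polynomial.X : Polynomial F) c t)
      = pbinom p N c t := by
    rw [pbinom_map (Polynomial.aeval N) p Polynomial.X c t, Polynomial.aeval_X]
  rw [h1, antipode_aeval hM hΔ hε, ← hN, h2, pbinom_inv p hNM hMN c t]
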